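/- If g is a real function (i.e., g(conj(z)) = conj(g(z)) for all z), then a rational function r in barycentric form r(s) = (Σ_{j=1}^d g(σ_j) ξ_j/(s−σ_j)) / (Σ_{i=1}^d ξ_i/(s−σ_i)) whose support points σ_j form a set closed under complex conjugation, and whose weights satisfy ξ_j' = conj(ξ_j) whenever σ_j' = conj(σ_j), is itself a real function: r(conj(s)) = conj(r(s)) for all s where r is defined. -/
import Mathlib


open scoped BigOperators

/-- A real function `g` (i.e. `g (conj z) = conj (g z)`) yields a real barycentric
rational function when the support points are closed under conjugation and the
weights are conjugated accordingly. -/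
theorem barycentric_real {d : ℕ} (g : ℂ → ℂ) (hg : ∀ z, g (star z) = star (g z))
    (σ ξ : Fin d → ℂ) (hσ : Function.Injective σ) (hξ : ∀ j, ξ j ≠ 0)
    (c : Equiv.Perm (Fin d)) (hc : ∀ j, σ (c j) = star (σ j))
    (hw : ∀ j, ξ (c j) = star (ξ j))
    (r : ℂ → ℂ)
    (hr : ∀ z, r z = (∑ j, g (σ j) * ξ j / (z - σ j)) / (∑ i, ξ i / (z - σ i)))
    (s : ℂ) (hs : s ∉ Set.range σ) (hs' : star s ∉ Set.range σ)
    (hden : (∑ i, ξ i / (s - σ i)) ≠ 0)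
    (hden' : (∑ i, ξ i / (star s - σ i)) ≠ 0) :
    r (star s) = star (r s) := by
  rw [hr, hr, star_div₀]
  congr 1
  · rw [← Equiv.sum_comp c (fun j => g (σ j) * ξ j / (star s - σ j)), star_sum]
    refine Finset.sum_congr rfl fun j _ => ?_
    rw [hc, hw, hg, star_div₀, star_sub, star_mul']
  · rw [← Equiv.sum_comp c (fun j => ξ j / (star s - σ j)), star_sum]
    refine Finset.sum_congr rfl fun j _ => ?_
    rw [hc, hw, star_div₀, star_sub]
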